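/- (Mild power reduction) If 0 < α < 1, 0 < ε < 1 and γ > 0, then R̃_i(M) → +∞ as M → ∞; that is, the asymptotic spectral efficiency grows without limit when the user and relay powers are scaled down more slowly than 1/M. -/

import Mathlib

open Real Filter Topology Finset

noncomputable section

/-- `η = τ·p_p·β/(1+τ·p_p·β)`. -/
def etaP (τ pp β : ℝ) : ℝ := τ * pp * β / (1 + τ * pp * β)

/-- `ω = β(K+η)/(K+1)`. -/
def omegaP (τ pp β K : ℝ) : ℝ := β * (K + etaP τ pp β) / (K + 1)

/-- `σ² = β/((1+τ·p_p·β)(K+1))`. -/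
def sigma2P (τ pp β K : ℝ) : ℝ := β / ((1 + τ * pp * β) * (K + 1))

/-- Generic interference coefficient: with `(b₁,k₁)` and `(b₂,k₂)` the two links involved,
`b₁·b₂/((k₁+1)(k₂+1))·[(k₁+η₁)/(1+τ·p_p·b₂) + k₂·η₁ + k₁·η₂ + η₁·η₂]`.
It specializes to `ξ_{XR,ij}`, `χ_{XR,ij}` and `ζ_{XR,ij}` of (25)–(27). -/
def xiP (τ pp b1 k1 b2 k2 : ℝ) : ℝ :=
  b1 * b2 / ((k1 + 1) * (k2 + 1)) *
    ((k1 + etaP τ pp b1) / (1 + τ * pp * b2) + k2 * etaP τ pp b1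
      + k1 * etaP τ pp b2 + etaP τ pp b1 * etaP τ pp b2)

variable {N : ℕ}

/-- `q_i = p_u σ²_{AR,i} + p_u σ²_{BR,i} + 1`. -/
def qP (τ pp pu : ℝ) (βA βB KA KB : Fin N → ℝ) (i : Fin N) : ℝ :=
  pu * sigma2P τ pp (βA i) (KA i) + pu * sigma2P τ pp (βB i) (KB i) + 1

/-- `Q_i = Σ_{j≠i} p_u·(ξ_{AR,ij}+ξ_{BR,ij}+χ_{AR,ij}+χ_{BR,ij})`. -/
def QP (τ pp pu : ℝ) (βA βB KA KB : Fin N → ℝ) (i : Fin N) : ℝ :=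
  ∑ j ∈ Finset.univ \ {i},
    pu * (xiP τ pp (βA i) (KA i) (βA j) (KA j) + xiP τ pp (βB i) (KB i) (βA j) (KA j)
      + xiP τ pp (βA i) (KA i) (βB j) (KB j) + xiP τ pp (βB i) (KB i) (βB j) (KB j))

/-- `Z_{ij} = p_r·(ζ_{AR,ij}+ζ_{BR,ij})`. -/
def ZP (τ pp pr : ℝ) (βA βB KA KB : Fin N → ℝ) (i j : Fin N) : ℝ :=
  pr * (xiP τ pp (βA j) (KA j) (βA i) (KA i) + xiP τ pp (βB j) (KB j) (βA i) (KA i))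

/-- `R̃_{1,i}(M)` of Theorem 1 (uplink phase). -/
def R1P (lam τ pp pu : ℝ) (βA βB KA KB : Fin N → ℝ) (i : Fin N) (M : ℝ) : ℝ :=
  lam * logb 2 (1 +
    (M * pu * (omegaP τ pp (βA i) (KA i)) ^ 2 + M * pu * (omegaP τ pp (βB i) (KB i)) ^ 2)
      / ((omegaP τ pp (βA i) (KA i) + omegaP τ pp (βB i) (KB i)) * qP τ pp pu βA βB KA KB i
          + QP τ pp pu βA βB KA KB i))

/-- `R̃_{AR,i}(M)` of Theorem 1. -/
def RARP (lam τ pp pu : ℝ) (βA βB KA KB : Fin N → ℝ) (i : Fin N) (M : ℝ) : ℝ :=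
  lam * logb 2 (1 + M * pu * (omegaP τ pp (βA i) (KA i)) ^ 2
      / ((omegaP τ pp (βA i) (KA i) + omegaP τ pp (βB i) (KB i)) * qP τ pp pu βA βB KA KB i
          + QP τ pp pu βA βB KA KB i))

/-- `R̃_{BR,i}(M)` of Theorem 1. -/
def RBRP (lam τ pp pu : ℝ) (βA βB KA KB : Fin N → ℝ) (i : Fin N) (M : ℝ) : ℝ :=
  lam * logb 2 (1 + M * pu * (omegaP τ pp (βB i) (KB i)) ^ 2
      / ((omegaP τ pp (βA i) (KA i) + omegaP τ pp (βB i) (KB i)) * qP τ pp pu βA βB KA KB i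
          + QP τ pp pu βA βB KA KB i))

/-- `R̃_{RA,i}(M)` of Theorem 1 (downlink to `U_{A,i}`). -/
def RRAP (lam τ pp pr : ℝ) (βA βB KA KB : Fin N → ℝ) (i : Fin N) (M : ℝ) : ℝ :=
  lam * logb 2 (1 + M * pr * (omegaP τ pp (βA i) (KA i)) ^ 2
      / (∑ j, (omegaP τ pp (βA j) (KA j) + omegaP τ pp (βB j) (KB j)
          + ZP τ pp pr βA βB KA KB i j)))

/-- `R̃_{RB,i}(M)` of Theorem 1 (downlink to `U_{B,i}`). -/
def RRBP (lam τ pp pr : ℝ) (βA βB KA KB : Fin N → ℝ) (i : Fin N) (M : ℝ) : ℝ :=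
  lam * logb 2 (1 + M * pr * (omegaP τ pp (βB i) (KB i)) ^ 2
      / (∑ j, (omegaP τ pp (βA j) (KA j) + omegaP τ pp (βB j) (KB j)
          + ZP τ pp pr βA βB KA KB i j)))

/-- `R̃_{2,i}(M) = min(R̃_{AR,i}, R̃_{RB,i}) + min(R̃_{BR,i}, R̃_{RA,i})`. -/
def R2P (lam τ pp pu pr : ℝ) (βA βB KA KB : Fin N → ℝ) (i : Fin N) (M : ℝ) : ℝ :=
  min (RARP lam τ pp pu βA βB KA KB i M) (RRBP lam τ pp pr βA βB KA KB i M)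
    + min (RBRP lam τ pp pu βA βB KA KB i M) (RRAP lam τ pp pr βA βB KA KB i M)

/-- `R̃_i(M) = min(R̃_{1,i}(M), R̃_{2,i}(M))`. -/
def RtotP (lam τ pp pu pr : ℝ) (βA βB KA KB : Fin N → ℝ) (i : Fin N) (M : ℝ) : ℝ :=
  min (R1P lam τ pp pu βA βB KA KB i M) (R2P lam τ pp pu pr βA βB KA KB i M)

end

section AuxLimits

variable {pp : ℕ → ℝ} (τ : ℝ)

lemma etaP_lim (β : ℝ) (hpp : Filter.Tendsto pp atTop (𝓝 0)) :
    Filter.Tendsto (fun M => etaP τ (pp M) β) atTop (𝓝 0) := by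
  have h1 : Filter.Tendsto (fun M => τ * pp M * β) atTop (𝓝 0) := by
    simpa using (hpp.const_mul τ).mul_const β
  have h2 : Filter.Tendsto (fun M => 1 + τ * pp M * β) atTop (𝓝 1) := by
    simpa using (tendsto_const_nhds (x := (1:ℝ))).add h1
  simpa [etaP, Pi.div_def] using h1.div h2 one_ne_zero

lemma omegaP_lim (β K : ℝ) (hpp : Filter.Tendsto pp atTop (𝓝 0)) :
    Filter.Tendsto (fun M => omegaP τ (pp M) β K) atTop (𝓝 (β * K / (K + 1))) := by
  have h := (((tendsto_const_nhds (x := K)).add (etaP_lim τ β hpp)).const_mul β).div_const (K + 1)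
  simpa [omegaP] using h

lemma sigma2P_lim (β K : ℝ) (hK : 0 < K) (hpp : Filter.Tendsto pp atTop (𝓝 0)) :
    Filter.Tendsto (fun M => sigma2P τ (pp M) β K) atTop (𝓝 (β / (K + 1))) := by
  have h1 : Filter.Tendsto (fun M => τ * pp M * β) atTop (𝓝 0) := by
    simpa using (hpp.const_mul τ).mul_const β
  have h2 : Filter.Tendsto (fun M => (1 + τ * pp M * β) * (K + 1)) atTop (𝓝 ((1 + 0) * (K + 1))) :=
    ((tendsto_const_nhds (x := (1:ℝ))).add h1).mul_const (K + 1)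
  have hne : ((1:ℝ) + 0) * (K + 1) ≠ 0 := by nlinarith
  simpa [sigma2P, Pi.div_def] using (tendsto_const_nhds (x := β)).div h2 hne

lemma xiP_lim (b1 k1 b2 k2 : ℝ) (hpp : Filter.Tendsto pp atTop (𝓝 0)) :
    ∃ L, Filter.Tendsto (fun M => xiP τ (pp M) b1 k1 b2 k2) atTop (𝓝 L) := by
  have he1 := etaP_lim τ b1 hpp
  have he2 := etaP_lim τ b2 hpp
  have hd : Filter.Tendsto (fun M => 1 + τ * pp M * b2) atTop (𝓝 1) := by
    simpa using (tendsto_const_nhds (x := (1:ℝ))).add ((hpp.const_mul τ).mul_const b2)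
  have h := Filter.Tendsto.const_mul (b1 * b2 / ((k1 + 1) * (k2 + 1)))
    (((((tendsto_const_nhds (x := k1)).add he1).div hd one_ne_zero).add
        (he1.const_mul k2)).add (he2.const_mul k1) |>.add (he1.mul he2))
  exact ⟨_, by unfold xiP; exact h⟩

lemma rate_atTop {lam : ℝ} (hlam : 0 < lam) {num den : ℕ → ℝ} {D : ℝ} (hD : 0 < D)
    (hnum : Filter.Tendsto num atTop atTop) (hden : Filter.Tendsto den atTop (𝓝 D)) :
    Filter.Tendsto (fun M => lam * Real.logb 2 (1 + num M / den M)) atTop atTop := by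
  have h1 : Filter.Tendsto (fun M => num M / den M) atTop atTop := by
    simpa [div_eq_mul_inv] using hnum.atTop_mul_pos (inv_pos.2 hD) (hden.inv₀ hD.ne')
  have h2 : Filter.Tendsto (fun M => 1 + num M / den M) atTop atTop :=
    tendsto_atTop_add_const_left atTop 1 h1
  have h3 := (Real.tendsto_logb_atTop (by norm_num : (1:ℝ) < 2)).comp h2
  exact Filter.Tendsto.const_mul_atTop hlam (by simpa [Function.comp_def] using h3)

lemma num_atTop {E α c : ℝ} (hE : 0 < E) (hα1 : α < 1) (hc : 0 < c) {w : ℕ → ℝ}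
    (hw : Filter.Tendsto w atTop (𝓝 c)) :
    Filter.Tendsto (fun M : ℕ => (M : ℝ) * (E / (M : ℝ) ^ α) * (w M) ^ 2) atTop atTop := by
  have hpow : Filter.Tendsto (fun M : ℕ => E * (M : ℝ) ^ (1 - α)) atTop atTop :=
    Filter.Tendsto.const_mul_atTop hE
      ((tendsto_rpow_atTop (by linarith)).comp tendsto_natCast_atTop_atTop)
  have heq : ∀ᶠ M : ℕ in atTop, E * (M : ℝ) ^ (1 - α) = (M : ℝ) * (E / (M : ℝ) ^ α) := by
    filter_upwards [Filter.eventually_ge_atTop 1] with M hM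
    have hM0 : (0:ℝ) < (M : ℝ) := by exact_mod_cast Nat.lt_of_lt_of_le Nat.zero_lt_one hM
    have hpα : (M : ℝ) ^ α ≠ 0 := (Real.rpow_pos_of_pos hM0 α).ne'
    rw [Real.rpow_sub hM0, Real.rpow_one]
    field_simp
  have h1 : Filter.Tendsto (fun M : ℕ => (M : ℝ) * (E / (M : ℝ) ^ α)) atTop atTop :=
    hpow.congr' heq
  exact h1.atTop_mul_pos (pow_pos hc 2) (hw.pow 2)

lemma min_atTop {f g : ℕ → ℝ} (hf : Filter.Tendsto f atTop atTop)
    (hg : Filter.Tendsto g atTop atTop) :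
    Filter.Tendsto (fun M => min (f M) (g M)) atTop atTop := by
  rw [Filter.tendsto_atTop] at *
  intro b
  filter_upwards [hf b, hg b] with M h1 h2
  exact le_min h1 h2

end AuxLimits


/-- Mild power reduction: if `0 < α < 1`, `0 < ε < 1` and `γ > 0`, then
`R̃_i(M) → +∞` as `M → ∞`: the SE grows without limit when the user and relay powers
are scaled down more slowly than `1/M`. -/
theorem power_scaling_mild
    (N : ℕ) (hN : 1 ≤ N) (i : Fin N) (T τ : ℝ) (hτ : 0 < τ) (hT : τ < T)
    (lam : ℝ) (hlam : lam = (T - τ) / (2 * T))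
    (Eu Er Ep : ℝ) (hEu : 0 < Eu) (hEr : 0 < Er) (hEp : 0 < Ep)
    (βA βB KA KB : Fin N → ℝ)
    (hβA : ∀ j, 0 < βA j) (hβB : ∀ j, 0 < βB j)
    (hKA : ∀ j, 0 < KA j) (hKB : ∀ j, 0 < KB j)
    (α ε γ : ℝ) (hα0 : 0 < α) (hα1 : α < 1) (hε0 : 0 < ε) (hε1 : ε < 1) (hγ : 0 < γ) :
    Tendsto (fun M : ℕ =>
        RtotP lam τ (Ep / (M : ℝ) ^ γ) (Eu / (M : ℝ) ^ α) (Er / (M : ℝ) ^ ε)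
          βA βB KA KB i (M : ℝ))
      atTop atTop := by
  have hlam0 : 0 < lam := by
    rw [hlam]; apply div_pos <;> linarith
  have hpow : ∀ δ : ℝ, 0 < δ → Tendsto (fun M : ℕ => (M : ℝ) ^ δ) atTop atTop :=
    fun δ hδ => (tendsto_rpow_atTop hδ).comp tendsto_natCast_atTop_atTop
  have hppt : Tendsto (fun M : ℕ => Ep / (M : ℝ) ^ γ) atTop (𝓝 0) :=
    tendsto_const_nhds.div_atTop (hpow γ hγ)
  have hput : Tendsto (fun M : ℕ => Eu / (M : ℝ) ^ α) atTop (𝓝 0) :=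
    tendsto_const_nhds.div_atTop (hpow α hα0)
  have hprt : Tendsto (fun M : ℕ => Er / (M : ℝ) ^ ε) atTop (𝓝 0) :=
    tendsto_const_nhds.div_atTop (hpow ε hε0)
  have hωA : ∀ j, Tendsto (fun M : ℕ => omegaP τ (Ep / (M : ℝ) ^ γ) (βA j) (KA j)) atTop
      (𝓝 (βA j * KA j / (KA j + 1))) := fun j => omegaP_lim τ _ _ hppt
  have hωB : ∀ j, Tendsto (fun M : ℕ => omegaP τ (Ep / (M : ℝ) ^ γ) (βB j) (KB j)) atTop
      (𝓝 (βB j * KB j / (KB j + 1))) := fun j => omegaP_lim τ _ _ hppt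
  have hwA : ∀ j, 0 < βA j * KA j / (KA j + 1) :=
    fun j => div_pos (mul_pos (hβA j) (hKA j)) (by linarith [hKA j])
  have hwB : ∀ j, 0 < βB j * KB j / (KB j + 1) :=
    fun j => div_pos (mul_pos (hβB j) (hKB j)) (by linarith [hKB j])
  -- q_i → 1
  have hq : Tendsto
      (fun M : ℕ => qP τ (Ep / (M : ℝ) ^ γ) (Eu / (M : ℝ) ^ α) βA βB KA KB i) atTop (𝓝 1) := by
    have h1 := hput.mul (sigma2P_lim τ (βA i) (KA i) (hKA i) hppt)
    have h2 := hput.mul (sigma2P_lim τ (βB i) (KB i) (hKB i) hppt)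
    have h3 := (h1.add h2).add (tendsto_const_nhds (x := (1:ℝ)))
    simpa [qP] using h3
  -- Q_i → 0
  have hQ : Tendsto
      (fun M : ℕ => QP τ (Ep / (M : ℝ) ^ γ) (Eu / (M : ℝ) ^ α) βA βB KA KB i) atTop (𝓝 0) := by
    have h : ∀ j ∈ Finset.univ \ {i}, Tendsto (fun M : ℕ =>
        (Eu / (M : ℝ) ^ α) *
          (xiP τ (Ep / (M : ℝ) ^ γ) (βA i) (KA i) (βA j) (KA j)
            + xiP τ (Ep / (M : ℝ) ^ γ) (βB i) (KB i) (βA j) (KA j)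
            + xiP τ (Ep / (M : ℝ) ^ γ) (βA i) (KA i) (βB j) (KB j)
            + xiP τ (Ep / (M : ℝ) ^ γ) (βB i) (KB i) (βB j) (KB j))) atTop (𝓝 0) := by
      intro j _
      obtain ⟨L1, h1⟩ := xiP_lim τ (βA i) (KA i) (βA j) (KA j) hppt
      obtain ⟨L2, h2⟩ := xiP_lim τ (βB i) (KB i) (βA j) (KA j) hppt
      obtain ⟨L3, h3⟩ := xiP_lim τ (βA i) (KA i) (βB j) (KB j) hppt
      obtain ⟨L4, h4⟩ := xiP_lim τ (βB i) (KB i) (βB j) (KB j) hppt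
      simpa using hput.mul (((h1.add h2).add h3).add h4)
    have h' := tendsto_finset_sum _ h
    simpa [QP] using h'
  -- Z_{ij} → 0
  have hZ : ∀ j, Tendsto
      (fun M : ℕ => ZP τ (Ep / (M : ℝ) ^ γ) (Er / (M : ℝ) ^ ε) βA βB KA KB i j) atTop (𝓝 0) := by
    intro j
    obtain ⟨L1, h1⟩ := xiP_lim τ (βA j) (KA j) (βA i) (KA i) hppt
    obtain ⟨L2, h2⟩ := xiP_lim τ (βB j) (KB j) (βA i) (KA i) hppt
    simpa [ZP] using hprt.mul (h1.add h2)
  -- uplink denominator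
  have hdenU : Tendsto (fun M : ℕ =>
      (omegaP τ (Ep / (M : ℝ) ^ γ) (βA i) (KA i) + omegaP τ (Ep / (M : ℝ) ^ γ) (βB i) (KB i))
        * qP τ (Ep / (M : ℝ) ^ γ) (Eu / (M : ℝ) ^ α) βA βB KA KB i
        + QP τ (Ep / (M : ℝ) ^ γ) (Eu / (M : ℝ) ^ α) βA βB KA KB i) atTop
      (𝓝 ((βA i * KA i / (KA i + 1) + βB i * KB i / (KB i + 1)) * 1 + 0)) :=
    (((hωA i).add (hωB i)).mul hq).add hQ
  have hDU : (0:ℝ) < (βA i * KA i / (KA i + 1) + βB i * KB i / (KB i + 1)) * 1 + 0 := by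
    have := hwA i; have := hwB i; linarith
  -- downlink denominator
  have hdenD : Tendsto (fun M : ℕ => ∑ j,
      (omegaP τ (Ep / (M : ℝ) ^ γ) (βA j) (KA j) + omegaP τ (Ep / (M : ℝ) ^ γ) (βB j) (KB j)
        + ZP τ (Ep / (M : ℝ) ^ γ) (Er / (M : ℝ) ^ ε) βA βB KA KB i j)) atTop
      (𝓝 (∑ j, (βA j * KA j / (KA j + 1) + βB j * KB j / (KB j + 1) + 0))) :=
    tendsto_finset_sum _ (fun j _ => ((hωA j).add (hωB j)).add (hZ j))
  have hDD : (0:ℝ) < ∑ j, (βA j * KA j / (KA j + 1) + βB j * KB j / (KB j + 1) + 0) :=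
    Finset.sum_pos (fun j _ => by have := hwA j; have := hwB j; linarith)
      ⟨i, Finset.mem_univ i⟩
  -- numerators
  have hnumA : Tendsto (fun M : ℕ =>
      (M : ℝ) * (Eu / (M : ℝ) ^ α) * (omegaP τ (Ep / (M : ℝ) ^ γ) (βA i) (KA i)) ^ 2)
      atTop atTop := num_atTop hEu hα1 (hwA i) (hωA i)
  have hnumB : Tendsto (fun M : ℕ =>
      (M : ℝ) * (Eu / (M : ℝ) ^ α) * (omegaP τ (Ep / (M : ℝ) ^ γ) (βB i) (KB i)) ^ 2)
      atTop atTop := num_atTop hEu hα1 (hwB i) (hωB i)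
  have hnumA' : Tendsto (fun M : ℕ =>
      (M : ℝ) * (Er / (M : ℝ) ^ ε) * (omegaP τ (Ep / (M : ℝ) ^ γ) (βA i) (KA i)) ^ 2)
      atTop atTop := num_atTop hEr hε1 (hwA i) (hωA i)
  have hnumB' : Tendsto (fun M : ℕ =>
      (M : ℝ) * (Er / (M : ℝ) ^ ε) * (omegaP τ (Ep / (M : ℝ) ^ γ) (βB i) (KB i)) ^ 2)
      atTop atTop := num_atTop hEr hε1 (hwB i) (hωB i)
  -- the five rates
  have hR1 : Tendsto (fun M : ℕ =>
      R1P lam τ (Ep / (M : ℝ) ^ γ) (Eu / (M : ℝ) ^ α) βA βB KA KB i (M : ℝ)) atTop atTop := by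
    simp only [R1P]
    exact rate_atTop hlam0 hDU (Filter.Tendsto.atTop_add_atTop hnumA hnumB) hdenU
  have hRAR : Tendsto (fun M : ℕ =>
      RARP lam τ (Ep / (M : ℝ) ^ γ) (Eu / (M : ℝ) ^ α) βA βB KA KB i (M : ℝ)) atTop atTop := by
    simp only [RARP]
    exact rate_atTop hlam0 hDU hnumA hdenU
  have hRBR : Tendsto (fun M : ℕ =>
      RBRP lam τ (Ep / (M : ℝ) ^ γ) (Eu / (M : ℝ) ^ α) βA βB KA KB i (M : ℝ)) atTop atTop := by
    simp only [RBRP]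
    exact rate_atTop hlam0 hDU hnumB hdenU
  have hRRA : Tendsto (fun M : ℕ =>
      RRAP lam τ (Ep / (M : ℝ) ^ γ) (Er / (M : ℝ) ^ ε) βA βB KA KB i (M : ℝ)) atTop atTop := by
    simp only [RRAP]
    exact rate_atTop hlam0 hDD hnumA' hdenD
  have hRRB : Tendsto (fun M : ℕ =>
      RRBP lam τ (Ep / (M : ℝ) ^ γ) (Er / (M : ℝ) ^ ε) βA βB KA KB i (M : ℝ)) atTop atTop := by
    simp only [RRBP]
    exact rate_atTop hlam0 hDD hnumB' hdenD
  simp only [RtotP, R2P]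
  exact min_atTop hR1 (Filter.Tendsto.atTop_add_atTop (min_atTop hRAR hRRB) (min_atTop hRBR hRRA))
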